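/- If a nonzero pair (λ, μ) ∈ 𝒦 spans an extremal ray of the Kostka cone 𝒦, then there exist an index i, a positive rational c, and disjoint subsets I, J with I ∪ J = {1, …, r}, such that λ = c·ϖ_i and μ = c·v_{I,J}(ϖ_i). -/

import Mathlib

open Finset

section PD
variable {V : Type*} [AddCommGroup V] [Module ℚ V] {r : ℕ}

/-- Positive-definiteness consequence for finite crystallographic data. -/
lemma stmt9_pd (b : Module.Basis (Fin r) ℚ V) (coroot : Fin r → Module.Dual ℚ V)
    (hdiag : ∀ i, coroot i (b i) = 2)
    (Φ : Set V) (hΦfin : Φ.Finite) (hΦroot : ∀ i, b i ∈ Φ)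
    (hΦrefl : ∀ β ∈ Φ, ∀ i, β - coroot i β • b i ∈ Φ) :
    ∀ (v : V) (t : Fin r → ℚ), v = ∑ i, t i • b i →
      (∀ i, t i * coroot i v ≤ 0) → v = 0 := by
  classical
  -- reflections
  set F : Fin r → (V →ₗ[ℚ] V) := fun i => LinearMap.id - (coroot i).smulRight (b i) with hF
  have hFapp : ∀ i v, F i v = v - coroot i v • b i := by
    intro i v; simp [hF, LinearMap.smulRight_apply]
  have hFF : ∀ i, (F i).comp (F i) = LinearMap.id := by
    intro i
    apply LinearMap.ext
    intro v
    simp only [LinearMap.comp_apply, hFapp, LinearMap.id_apply, map_sub, map_smul, hdiag i,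
      smul_eq_mul]
    rw [mul_comm, two_mul]
    simp only [sub_smul, add_smul]
    abel
  set σ : Fin r → (V ≃ₗ[ℚ] V) := fun i => LinearEquiv.ofLinear (F i) (F i) (hFF i) (hFF i)
    with hσ
  have hσapp : ∀ i v, σ i v = v - coroot i v • b i := by
    intro i v; simp [hσ, LinearEquiv.ofLinear_apply, hFapp]
  have hσsq : ∀ i, σ i * σ i = 1 := by
    intro i
    apply LinearEquiv.toLinearMap_injective
    exact hFF i
  set G : Subgroup (V ≃ₗ[ℚ] V) := Subgroup.closure (Set.range σ) with hG
  have hσG : ∀ i, σ i ∈ G := fun i => Subgroup.subset_closure ⟨i, rfl⟩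
  have hmulapp : ∀ (g h : V ≃ₗ[ℚ] V) (v : V), (g * h) v = g (h v) := fun _ _ _ => rfl
  -- G preserves Φ
  have hGΦ : ∀ g ∈ G, ∀ v ∈ Φ, g v ∈ Φ := by
    intro g hg
    have : (∀ v ∈ Φ, g v ∈ Φ) ∧ (∀ v ∈ Φ, g⁻¹ v ∈ Φ) := by
      refine Subgroup.closure_induction ?_ ?_ ?_ ?_ hg
      · rintro _ ⟨i, rfl⟩
        have h1 : ∀ v ∈ Φ, σ i v ∈ Φ := by
          intro v hv; rw [hσapp]; exact hΦrefl v hv i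
        constructor
        · exact h1
        · intro v hv
          have : (σ i)⁻¹ = σ i := by
            have := hσsq i
            calc (σ i)⁻¹ = (σ i)⁻¹ * (σ i * σ i) := by rw [this, mul_one]
            _ = σ i := by rw [← mul_assoc, inv_mul_cancel, one_mul]
          rw [this]; exact h1 v hv
      · exact ⟨fun v hv => hv, fun v hv => hv⟩
      · rintro g h _ _ ⟨hg1, hg2⟩ ⟨hh1, hh2⟩
        constructor
        · intro v hv; rw [hmulapp]; exact hg1 _ (hh1 _ hv)
        · intro v hv
          rw [mul_inv_rev, hmulapp]
          exact hh2 _ (hg2 _ hv)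
      · rintro g _ ⟨hg1, hg2⟩
        exact ⟨hg2, by simpa using hg1⟩
    exact this.1
  -- G is finite
  haveI : Finite ↥Φ := hΦfin.to_subtype
  haveI hGfinite : Finite ↥G := by
    have hinj : Function.Injective (fun (g : ↥G) => (fun v : ↥Φ => (⟨g.1 v.1, hGΦ g.1 g.2 v.1 v.2⟩ : ↥Φ))) := by
      intro g1 g2 h
      have hb : ∀ i, g1.1 (b i) = g2.1 (b i) := by
        intro i
        have := congrFun h ⟨b i, hΦroot i⟩
        exact congrArg Subtype.val this
      apply Subtype.ext
      apply LinearEquiv.toLinearMap_injective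
      exact Module.Basis.ext b hb
    exact Finite.of_injective _ hinj
  have hGsetfin : (G : Set (V ≃ₗ[ℚ] V)).Finite := Set.toFinite _
  set Gfin : Finset (V ≃ₗ[ℚ] V) := hGsetfin.toFinset with hGfin
  have hmemG : ∀ g, g ∈ Gfin ↔ g ∈ G := by
    intro g; rw [hGfin, Set.Finite.mem_toFinset]; rfl
  -- the invariant form
  set D : V → V → ℚ := fun v w => ∑ i, b.repr v i * b.repr w i with hD
  set B : V → V → ℚ := fun v w => ∑ g ∈ Gfin, D (g v) (g w) with hB
  have hDnonneg : ∀ v, 0 ≤ D v v := by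
    intro v; apply Finset.sum_nonneg; intro i _; exact mul_self_nonneg _
  have hBnonneg : ∀ v, 0 ≤ B v v := by
    intro v; apply Finset.sum_nonneg; intro g _; exact hDnonneg _
  have hBpos : ∀ v, v ≠ 0 → 0 < B v v := by
    intro v hv
    have h1 : (1 : V ≃ₗ[ℚ] V) ∈ Gfin := (hmemG 1).2 (one_mem G)
    have hD1 : 0 < D v v := by
      obtain ⟨i, hi⟩ : ∃ i, b.repr v i ≠ 0 := by
        by_contra hc
        push_neg at hc
        apply hv
        have : b.repr v = 0 := by ext i; exact hc i
        simpa using congrArg b.repr.symm this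
      apply Finset.sum_pos'
      · intro j _; exact mul_self_nonneg _
      · exact ⟨i, Finset.mem_univ i, mul_self_pos.mpr hi⟩
    calc (0:ℚ) < D v v := hD1
    _ = D ((1 : V ≃ₗ[ℚ] V) v) ((1 : V ≃ₗ[ℚ] V) v) := by rfl
    _ ≤ B v v := Finset.single_le_sum (fun g _ => hDnonneg _) h1
  -- invariance
  have hBinv : ∀ i v w, B (σ i v) (σ i w) = B v w := by
    intro i v w
    rw [hB]
    refine Finset.sum_nbij' (fun g => g * σ i) (fun g => g * σ i) ?_ ?_ ?_ ?_ ?_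
    · intro g hg
      exact (hmemG _).2 (mul_mem ((hmemG g).1 hg) (hσG i))
    · intro g hg
      exact (hmemG _).2 (mul_mem ((hmemG g).1 hg) (hσG i))
    · intro g _; show g * σ i * σ i = g; rw [mul_assoc, hσsq, mul_one]
    · intro g _; show g * σ i * σ i = g; rw [mul_assoc, hσsq, mul_one]
    · intro g _
      rw [hmulapp, hmulapp]
  -- bilinearity pieces we need
  have hBsymm : ∀ v w, B v w = B w v := by
    intro v w; rw [hB]
    apply Finset.sum_congr rfl
    intro g _; rw [hD]
    exact Finset.sum_congr rfl (fun i _ => mul_comm _ _)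
  have hDsub : ∀ u u' w, D (u - u') w = D u w - D u' w := by
    intro u u' w; rw [hD]
    rw [← Finset.sum_sub_distrib]
    apply Finset.sum_congr rfl
    intro i _
    rw [map_sub]
    simp [sub_mul]
  have hBsubl : ∀ u u' w, B (u - u') w = B u w - B u' w := by
    intro u u' w; rw [hB, ← Finset.sum_sub_distrib]
    apply Finset.sum_congr rfl
    intro g _
    rw [map_sub, hDsub]
  have hDsmul : ∀ (c : ℚ) u w, D (c • u) w = c * D u w := by
    intro c u w; rw [hD, Finset.mul_sum]
    apply Finset.sum_congr rfl
    intro i _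
    rw [map_smul]
    simp [mul_assoc]
  have hBsmull : ∀ (c : ℚ) u w, B (c • u) w = c * B u w := by
    intro c u w; rw [hB, Finset.mul_sum]
    apply Finset.sum_congr rfl
    intro g _
    rw [map_smul, hDsmul]
  have hBneg : ∀ u w, B (-u) w = - B u w := by
    intro u w
    have := hBsubl 0 u w
    have h0 : B 0 w = 0 := by
      have := hBsmull 0 0 w; simpa using this
    simpa [h0] using this
  -- the key identity : coroot j v * B (b j) (b j) = 2 * B v (b j)
  have hkey : ∀ (v : V) (j : Fin r), coroot j v * B (b j) (b j) = 2 * B v (b j) := by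
    intro v j
    have h1 : B (σ j v) (σ j (b j)) = B v (b j) := hBinv j v (b j)
    have h2 : σ j (b j) = - b j := by
      rw [hσapp, hdiag]
      rw [two_smul]; abel
    rw [h2, hσapp, hBsymm _ (-(b j)), hBneg, hBsymm (b j), hBsubl, hBsmull] at h1
    ring_nf at h1 ⊢
    linarith
  have hBaddl : ∀ u u' w, B (u + u') w = B u w + B u' w := by
    intro u u' w
    have := hBsubl u (-u') w
    rw [hBneg] at this
    simpa [sub_neg_eq_add] using this
  have hBsuml : ∀ (t : Fin r → ℚ) (s : Finset (Fin r)) (w : V),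
      B (∑ i ∈ s, t i • b i) w = ∑ i ∈ s, t i * B (b i) w := by
    intro t s w
    induction s using Finset.induction with
    | empty => simpa using hBsmull 0 0 w
    | insert _ _ hnot ih =>
      rw [Finset.sum_insert hnot, Finset.sum_insert hnot, hBaddl, hBsmull, ih]
  -- conclude
  intro v t hvt ht
  by_contra hv
  have hBpos' := hBpos v hv
  have hexp : B v v = ∑ i, t i * B (b i) v := by
    conv_lhs => rw [hvt]
    rw [hBsuml]
    exact Finset.sum_congr rfl (fun i _ => by rw [← hvt])
  have hterm : ∀ i : Fin r, t i * B (b i) v ≤ 0 := by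
    intro i
    have hBbb : 0 < B (b i) (b i) := hBpos (b i) (b.ne_zero i)
    have hk := hkey v i
    have h2 : t i * (coroot i v * B (b i) (b i)) ≤ 0 := by
      rcases mul_nonpos_iff.1 (ht i) with ⟨h1, h2⟩ | ⟨h1, h2⟩
      · exact mul_nonpos_of_nonneg_of_nonpos h1 (mul_nonpos_of_nonpos_of_nonneg h2 hBbb.le)
      · exact mul_nonpos_of_nonpos_of_nonneg h1 (mul_nonneg h2 hBbb.le)
    rw [hk, hBsymm v (b i)] at h2
    nlinarith [h2]
  have hfin : B v v ≤ 0 := by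
    rw [hexp]; exact Finset.sum_nonpos (fun i _ => hterm i)
  linarith

end PD


/-- The Kostka cone `𝒦 ⊆ V × V`: pairs `(lam, mu)` of dominant weights such that
`lam - mu` is a nonnegative rational combination of the simple roots. -/
def Kostka {V : Type*} [AddCommGroup V] [Module ℚ V] {r : ℕ}
    (b : Fin r → V) (coroot : Fin r → Module.Dual ℚ V) : Set (V × V) :=
  {p | (∀ i, 0 ≤ coroot i p.1) ∧ (∀ i, 0 ≤ coroot i p.2) ∧
    ∃ c : Fin r → ℚ, (∀ i, 0 ≤ c i) ∧ p.1 - p.2 = ∑ i, c i • b i}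

/-- If a nonzero pair `(lam, mu) ∈ 𝒦` spans an extremal ray of the Kostka
cone `𝒦`, then there exist an index `i`, a positive rational `c`, and disjoint subsets
`I, J` with `I ∪ J = {1, …, r}`, such that `lam = c•ϖ_i` and `mu = c•v_{I,J}(ϖ_i)`. -/
theorem stmt_9 {V : Type*} [AddCommGroup V] [Module ℚ V] {r : ℕ}
    (b : Module.Basis (Fin r) ℚ V) (coroot : Fin r → Module.Dual ℚ V)
    (hdiag : ∀ i, coroot i (b i) = 2)
    (hoff : ∀ i j : Fin r, i ≠ j → coroot j (b i) ≤ 0)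
    (hint : ∀ i j : Fin r, ∃ n : ℤ, coroot j (b i) = (n : ℚ))
    (Φ : Set V) (hΦfin : Φ.Finite) (hΦroot : ∀ i, b i ∈ Φ)
    (hΦrefl : ∀ β ∈ Φ, ∀ i, β - coroot i β • b i ∈ Φ)
    (x : Fin r → Module.Dual ℚ V)
    (hx : ∀ i j : Fin r, x j (b i) = if i = j then 1 else 0)
    (ϖ : Fin r → V)
    (hϖ : ∀ i j : Fin r, coroot j (ϖ i) = if i = j then 1 else 0)
    (lam mu : V)
    (hK : (lam, mu) ∈ Kostka (⇑b) coroot)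
    (hne : (lam, mu) ≠ (0 : V × V))
    (hext : ∀ p q : V × V, p ∈ Kostka (⇑b) coroot → q ∈ Kostka (⇑b) coroot →
      p + q = (lam, mu) →
        (∃ c : ℚ, 0 ≤ c ∧ p = c • (lam, mu)) ∧
        (∃ c : ℚ, 0 ≤ c ∧ q = c • (lam, mu))) :
    ∃ (i : Fin r) (c : ℚ), 0 < c ∧
      ∃ I J : Finset (Fin r), Disjoint I J ∧ I ∪ J = Finset.univ ∧
        ∃ v : V, (∀ k ∈ I, coroot k v = 0) ∧ (∀ j ∈ J, x j (ϖ i - v) = 0) ∧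
          lam = c • ϖ i ∧ mu = c • v := by
  classical
  -- coordinates
  have hxrep : ∀ (v : V) (j : Fin r), x j v = b.repr v j := by
    intro v j
    conv_lhs => rw [← b.sum_repr v]
    rw [map_sum]
    simp only [map_smul, hx, smul_eq_mul, mul_ite, mul_one, mul_zero]
    rw [Finset.sum_ite_eq' Finset.univ j (fun i => b.repr v i)]
    simp
  have hexpand : ∀ v : V, v = ∑ i, x i v • b i := by
    intro v
    conv_lhs => rw [← b.sum_repr v]
    exact Finset.sum_congr rfl (fun i _ => by rw [hxrep])
  obtain ⟨hlamdom, hmudom, c0, hc0, hzc⟩ := hK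
  simp only at hlamdom hmudom hzc
  have hxz : ∀ j, x j (lam - mu) = c0 j := by
    intro j
    rw [hzc, map_sum]
    simp only [map_smul, hx, smul_eq_mul, mul_ite, mul_one, mul_zero]
    rw [Finset.sum_ite_eq' Finset.univ j (fun i => c0 i)]
    simp
  have hxznn : ∀ j, 0 ≤ x j (lam - mu) := fun j => (hxz j) ▸ hc0 j
  -- r = 0 is impossible
  rcases Nat.eq_zero_or_pos r with hr | hr
  · exfalso
    apply hne
    subst hr
    have h1 : lam = 0 := by simpa using hexpand lam
    have h2 : mu = 0 := by simpa using hexpand mu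
    rw [h1, h2]; rfl
  haveI : Nonempty (Fin r) := ⟨⟨0, hr⟩⟩
  -- nondegeneracy of the coroot pairing
  have hnondeg : ∀ v : V, (∀ j, coroot j v = 0) → v = 0 := by
    intro v hv
    refine stmt9_pd b coroot hdiag Φ hΦfin hΦroot hΦrefl v (fun i => b.repr v i) ?_ ?_
    · exact (b.sum_repr v).symm
    · intro i; rw [hv i, mul_zero]
  -- membership helper
  have memK : ∀ y z : V, (∀ i, 0 ≤ coroot i y) → (∀ i, 0 ≤ coroot i z) →
      (∀ i, 0 ≤ x i (y - z)) → (y, z) ∈ Kostka (⇑b) coroot :=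
    fun y z h1 h2 h3 => ⟨h1, h2, fun i => x i (y - z), h3, hexpand (y - z)⟩
  -- the extremality tangent-space lemma
  have hEXT : ∀ u w : V, (∀ j, coroot j lam = 0 → coroot j u = 0) →
      (∀ j, coroot j mu = 0 → coroot j w = 0) →
      (∀ j, x j (lam - mu) = 0 → x j (u - w) = 0) →
      ∃ s : ℚ, u = s • lam ∧ w = s • mu := by
    intro u w h1 h2 h3
    set g : Fin r → ℚ := fun j =>
      min (if coroot j u = 0 then 1 else coroot j lam / |coroot j u|)
        (min (if coroot j w = 0 then 1 else coroot j mu / |coroot j w|)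
          (if x j (u - w) = 0 then 1 else x j (lam - mu) / |x j (u - w)|)) with hg
    have hgpos : ∀ j, 0 < g j := by
      intro j
      have p1 : 0 < (if coroot j u = 0 then (1:ℚ) else coroot j lam / |coroot j u|) := by
        split_ifs with h
        · norm_num
        · have hne0 : coroot j lam ≠ 0 := fun hc => h (h1 j hc)
          exact div_pos (lt_of_le_of_ne (hlamdom j) (Ne.symm hne0)) (abs_pos.mpr h)
      have p2 : 0 < (if coroot j w = 0 then (1:ℚ) else coroot j mu / |coroot j w|) := by
        split_ifs with h
        · norm_num
        · have hne0 : coroot j mu ≠ 0 := fun hc => h (h2 j hc)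
          exact div_pos (lt_of_le_of_ne (hmudom j) (Ne.symm hne0)) (abs_pos.mpr h)
      have p3 : 0 < (if x j (u - w) = 0 then (1:ℚ) else x j (lam - mu) / |x j (u - w)|) := by
        split_ifs with h
        · norm_num
        · have hne0 : x j (lam - mu) ≠ 0 := fun hc => h (h3 j hc)
          exact div_pos (lt_of_le_of_ne (hxznn j) (Ne.symm hne0)) (abs_pos.mpr h)
      exact lt_min p1 (lt_min p2 p3)
    set ε : ℚ := Finset.univ.inf' Finset.univ_nonempty g with hε
    have hεpos : 0 < ε := by
      rw [hε]
      exact (Finset.lt_inf'_iff _).2 (fun j _ => hgpos j)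
    have hεle : ∀ j, ε ≤ g j := fun j => Finset.inf'_le _ (Finset.mem_univ j)
    have hb1 : ∀ j, ε * |coroot j u| ≤ coroot j lam := by
      intro j
      by_cases h : coroot j u = 0
      · rw [h]; simpa using hlamdom j
      · have := le_trans (hεle j) (min_le_left _ _)
        rw [if_neg h] at this
        rw [← le_div_iff₀ (abs_pos.mpr h)]
        exact this
    have hb2 : ∀ j, ε * |coroot j w| ≤ coroot j mu := by
      intro j
      by_cases h : coroot j w = 0
      · rw [h]; simpa using hmudom j
      · have := le_trans (hεle j) (le_trans (min_le_right _ _) (min_le_left _ _))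
        rw [if_neg h] at this
        rw [← le_div_iff₀ (abs_pos.mpr h)]
        exact this
    have hb3 : ∀ j, ε * |x j (u - w)| ≤ x j (lam - mu) := by
      intro j
      by_cases h : x j (u - w) = 0
      · rw [h]; simpa using hxznn j
      · have := le_trans (hεle j) (le_trans (min_le_right _ _) (min_le_right _ _))
        rw [if_neg h] at this
        rw [← le_div_iff₀ (abs_pos.mpr h)]
        exact this
    have habs : ∀ t s : ℚ, ε * |s| ≤ t → (0 ≤ t + ε * s ∧ 0 ≤ t - ε * s) := by
      intro t s hts
      have h1' := mul_le_mul_of_nonneg_left (neg_abs_le s) hεpos.le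
      have h2' := mul_le_mul_of_nonneg_left (le_abs_self s) hεpos.le
      constructor <;> nlinarith
    set pp : V × V := ((2:ℚ)⁻¹ • (lam + ε • u), (2:ℚ)⁻¹ • (mu + ε • w)) with hpp
    set qq : V × V := ((2:ℚ)⁻¹ • (lam - ε • u), (2:ℚ)⁻¹ • (mu - ε • w)) with hqq
    have hppK : pp ∈ Kostka (⇑b) coroot := by
      refine memK _ _ ?_ ?_ ?_
      · intro i
        have : coroot i ((2:ℚ)⁻¹ • (lam + ε • u)) = (2:ℚ)⁻¹ * (coroot i lam + ε * coroot i u) := by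
          simp [map_add, map_smul, smul_eq_mul]
          try ring
        rw [this]
        have := (habs _ _ (hb1 i)).1
        positivity
      · intro i
        have : coroot i ((2:ℚ)⁻¹ • (mu + ε • w)) = (2:ℚ)⁻¹ * (coroot i mu + ε * coroot i w) := by
          simp [map_add, map_smul, smul_eq_mul]
          try ring
        rw [this]
        have := (habs _ _ (hb2 i)).1
        positivity
      · intro i
        have hdiff : (2:ℚ)⁻¹ • (lam + ε • u) - (2:ℚ)⁻¹ • (mu + ε • w)
            = (2:ℚ)⁻¹ • ((lam - mu) + ε • (u - w)) := by
          module
        show 0 ≤ x i _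
        rw [hdiff]
        have : x i ((2:ℚ)⁻¹ • ((lam - mu) + ε • (u - w)))
            = (2:ℚ)⁻¹ * (x i (lam - mu) + ε * x i (u - w)) := by
          simp [map_add, map_smul, smul_eq_mul]
          try ring
        rw [this]
        have := (habs _ _ (hb3 i)).1
        positivity
    have hqqK : qq ∈ Kostka (⇑b) coroot := by
      refine memK _ _ ?_ ?_ ?_
      · intro i
        have : coroot i ((2:ℚ)⁻¹ • (lam - ε • u)) = (2:ℚ)⁻¹ * (coroot i lam - ε * coroot i u) := by
          simp [map_sub, map_smul, smul_eq_mul]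
          try ring
        rw [this]
        have := (habs _ _ (hb1 i)).2
        positivity
      · intro i
        have : coroot i ((2:ℚ)⁻¹ • (mu - ε • w)) = (2:ℚ)⁻¹ * (coroot i mu - ε * coroot i w) := by
          simp [map_sub, map_smul, smul_eq_mul]
          try ring
        rw [this]
        have := (habs _ _ (hb2 i)).2
        positivity
      · intro i
        have hdiff : (2:ℚ)⁻¹ • (lam - ε • u) - (2:ℚ)⁻¹ • (mu - ε • w)
            = (2:ℚ)⁻¹ • ((lam - mu) - ε • (u - w)) := by
          module
        show 0 ≤ x i _
        rw [hdiff]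
        have : x i ((2:ℚ)⁻¹ • ((lam - mu) - ε • (u - w)))
            = (2:ℚ)⁻¹ * (x i (lam - mu) - ε * x i (u - w)) := by
          simp [map_sub, map_smul, smul_eq_mul]
          try ring
        rw [this]
        have := (habs _ _ (hb3 i)).2
        positivity
    have hsum : pp + qq = (lam, mu) := by
      rw [hpp, hqq, Prod.mk_add_mk, Prod.mk.injEq]
      constructor <;> module
    obtain ⟨⟨t, _, hpt⟩, _⟩ := hext pp qq hppK hqqK hsum
    rw [hpp] at hpt
    have hpt1 : (2:ℚ)⁻¹ • (lam + ε • u) = t • lam := by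
      have := congrArg Prod.fst hpt
      simpa using this
    have hpt2 : (2:ℚ)⁻¹ • (mu + ε • w) = t • mu := by
      have := congrArg Prod.snd hpt
      simpa using this
    refine ⟨(2 * t - 1) / ε, ?_, ?_⟩
    · have h2' : lam + ε • u = (2 * t) • lam := by
        have h := congrArg (fun v : V => (2:ℚ) • v) hpt1
        simp only [smul_smul] at h
        norm_num at h
        exact h
      have h3' : ε • u = (2 * t - 1) • lam := by
        rw [sub_smul, one_smul, ← h2']; abel
      calc u = ε⁻¹ • (ε • u) := (inv_smul_smul₀ hεpos.ne' u).symm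
      _ = ((2*t-1)/ε) • lam := by rw [h3', smul_smul, div_eq_inv_mul]
    · have h2' : mu + ε • w = (2 * t) • mu := by
        have h := congrArg (fun v : V => (2:ℚ) • v) hpt2
        simp only [smul_smul] at h
        norm_num at h
        exact h
      have h3' : ε • w = (2 * t - 1) • mu := by
        rw [sub_smul, one_smul, ← h2']; abel
      calc w = ε⁻¹ • (ε • w) := (inv_smul_smul₀ hεpos.ne' w).symm
      _ = ((2*t-1)/ε) • mu := by rw [h3', smul_smul, div_eq_inv_mul]
  -- lam ≠ 0
  have hlamne : lam ≠ 0 := by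
    intro h0
    apply hne
    have hz0 : lam - mu = 0 := by
      refine stmt9_pd b coroot hdiag Φ hΦfin hΦroot hΦrefl (lam - mu) c0 hzc ?_
      intro i
      have hcz : coroot i (lam - mu) = - coroot i mu := by rw [map_sub, h0, map_zero, zero_sub]
      rw [hcz]
      exact mul_nonpos_of_nonneg_of_nonpos (hc0 i) (by linarith [hmudom i])
    have hmu0 : mu = 0 := by
      have := sub_eq_zero.mp hz0
      rw [← this, h0]
    rw [h0, hmu0]; rfl
  obtain ⟨p0, hp0⟩ : ∃ p0, coroot p0 lam ≠ 0 := by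
    by_contra hc
    push_neg at hc
    exact hlamne (hnondeg lam hc)
  have hp0pos : 0 < coroot p0 lam := lt_of_le_of_ne (hlamdom p0) (Ne.symm hp0)
  by_cases hzero : lam - mu = 0
  · -- degenerate case mu = lam
    have hml : mu = lam := (sub_eq_zero.mp hzero).symm
    have hh1 : ∀ j, coroot j lam = 0 → coroot j (ϖ p0) = 0 := by
      intro j hj
      rw [hϖ, if_neg (fun h : p0 = j => hp0 (h ▸ hj))]
    have hh2 : ∀ j, coroot j mu = 0 → coroot j (ϖ p0) = 0 := by
      intro j hj
      rw [hϖ, if_neg (fun h : p0 = j => hp0 (h ▸ (hml ▸ hj)))]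
    have hh3 : ∀ j, x j (lam - mu) = 0 → x j (ϖ p0 - ϖ p0) = 0 := by
      intro j _; simp
    obtain ⟨s, hs1, hs2⟩ := hEXT (ϖ p0) (ϖ p0) hh1 hh2 hh3
    · have hs1' : (1:ℚ) = s * coroot p0 lam := by
        have := congrArg (coroot p0) hs1
        rw [map_smul, hϖ, if_pos rfl, smul_eq_mul] at this
        exact this
      have hspos : 0 < s := by
        rcases lt_trichotomy s 0 with h | h | h
        · nlinarith
        · rw [h] at hs1'; norm_num at hs1'
        · exact h
      refine ⟨p0, s⁻¹, inv_pos.2 hspos, ∅, Finset.univ, by simp, by simp, ϖ p0, ?_, ?_, ?_, ?_⟩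
      · intro k hk; simp at hk
      · intro j _; simp
      · rw [hs1, inv_smul_smul₀ hspos.ne']
      · rw [hml, hs1, inv_smul_smul₀ hspos.ne']
  · -- main case : lam - mu ≠ 0
    -- complementary zeros of lam and mu
    have hslack0 : ∀ k, coroot k lam ≠ 0 → coroot k mu = 0 := by
      intro k hk
      by_contra hdk
      obtain ⟨s, hs1, hs2⟩ := hEXT (ϖ k) (ϖ k)
        (fun j hj => by rw [hϖ, if_neg (fun h : k = j => hk (h ▸ hj))])
        (fun j hj => by rw [hϖ, if_neg (fun h : k = j => hdk (h ▸ hj))])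
        (fun j _ => by simp)
      have hsne : s ≠ 0 := by
        intro h
        rw [h, zero_smul] at hs1
        have := hϖ k k
        rw [hs1, map_zero, if_pos rfl] at this
        norm_num at this
      apply hzero
      have : s • (lam - mu) = 0 := by rw [smul_sub, ← hs1, ← hs2, sub_self]
      exact (smul_eq_zero.mp this).resolve_left hsne
    set S : Finset (Fin r) := Finset.univ.filter (fun j => x j (lam - mu) ≠ 0) with hS
    have hmemS : ∀ j, j ∈ S ↔ x j (lam - mu) ≠ 0 := by
      intro j; rw [hS, Finset.mem_filter]; simp
    have hxSpos : ∀ j ∈ S, 0 < x j (lam - mu) :=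
      fun j hj => lt_of_le_of_ne (hxznn j) (Ne.symm ((hmemS j).1 hj))
    have hzSsum : lam - mu = ∑ j ∈ S, x j (lam - mu) • b j := by
      rw [Finset.sum_subset (Finset.subset_univ S)]
      · exact hexpand (lam - mu)
      · intro i _ hiS
        rw [not_not.mp (fun h => hiS ((hmemS i).2 h)), zero_smul]
    have hcorz : ∀ p : Fin r, p ∉ S → coroot p (lam - mu) ≤ 0 := by
      intro p hp
      rw [hzSsum, map_sum]
      refine Finset.sum_nonpos (fun j hj => ?_)
      rw [map_smul, smul_eq_mul]
      have hjp : j ≠ p := fun h => hp (h ▸ hj)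
      exact mul_nonpos_of_nonneg_of_nonpos (hxSpos j hj).le (hoff j p hjp)
    have hPS : ∀ p, coroot p lam ≠ 0 → p ∈ S := by
      intro p hp
      by_contra hpS
      have h1' := hcorz p hpS
      rw [map_sub, hslack0 p hp, sub_zero] at h1'
      exact hp (le_antisymm h1' (hlamdom p))
    -- the span of the support
    set Wsp : Submodule ℚ V := Submodule.span ℚ (b '' (S : Set (Fin r))) with hWsp
    have hWx : ∀ v ∈ Wsp, ∀ j, j ∉ S → x j v = 0 := by
      intro v hv j hj
      have hle : Wsp ≤ LinearMap.ker (x j) := by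
        rw [hWsp, Submodule.span_le]
        rintro _ ⟨i, hi, rfl⟩
        have hij : (i : Fin r) ≠ j := fun h => hj (h ▸ (Finset.mem_coe.mp hi))
        rw [SetLike.mem_coe, LinearMap.mem_ker, hx, if_neg hij]
      exact LinearMap.mem_ker.mp (hle hv)
    have hWcor : ∀ j, coroot j lam = 0 → coroot j mu = 0 → j ∉ S → ∀ v ∈ Wsp, coroot j v = 0 := by
      intro j hj1 hj2 hjS
      have hz0 : coroot j (lam - mu) = 0 := by rw [map_sub, hj1, hj2, sub_zero]
      have hsum0 : ∑ s' ∈ S, x s' (lam - mu) * coroot j (b s') = 0 := by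
        rw [← hz0]
        conv_rhs => rw [hzSsum]
        rw [map_sum]
        exact Finset.sum_congr rfl (fun s' _ => by rw [map_smul, smul_eq_mul])
      have heach : ∀ s' ∈ S, x s' (lam - mu) * coroot j (b s') = 0 := by
        refine (Finset.sum_eq_zero_iff_of_nonpos (fun s' hs' => ?_)).mp hsum0
        have hsj : s' ≠ j := fun h => hjS (h ▸ hs')
        exact mul_nonpos_of_nonneg_of_nonpos (hxSpos s' hs').le (hoff s' j hsj)
      intro v hv
      have hle : Wsp ≤ LinearMap.ker (coroot j) := by
        rw [hWsp, Submodule.span_le]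
        rintro _ ⟨i, hi, rfl⟩
        have hi' := heach i (Finset.mem_coe.mp hi)
        rw [SetLike.mem_coe, LinearMap.mem_ker]
        rcases mul_eq_zero.mp hi' with h | h
        · exact absurd h ((hmemS i).1 (Finset.mem_coe.mp hi))
        · exact h
      exact LinearMap.mem_ker.mp (hle hv)
    -- every vector in Wsp killed by the "doubly-zero" coroots is a multiple of lam - mu
    set P : Finset (Fin r) := Finset.univ.filter (fun p => coroot p lam ≠ 0) with hP
    have hkerY : ∀ v ∈ Wsp, (∀ j ∈ S, coroot j lam = 0 → coroot j mu = 0 → coroot j v = 0) →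
        ∃ s : ℚ, v = s • (lam - mu) := by
      intro v hv hvz
      set u : V := ∑ p ∈ P, coroot p v • ϖ p with hu
      have hucor : ∀ j, coroot j u = if j ∈ P then coroot j v else 0 := by
        intro j
        rw [hu, map_sum]
        have : ∀ p ∈ P, coroot j (coroot p v • ϖ p) = if p = j then coroot p v else 0 := by
          intro p _
          rw [map_smul, hϖ, smul_eq_mul, mul_ite, mul_one, mul_zero]
        rw [Finset.sum_congr rfl this, Finset.sum_ite_eq' P j (fun p => coroot p v)]
      have hg1 : ∀ j, coroot j lam = 0 → coroot j u = 0 := by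
        intro j hj
        rw [hucor, if_neg (by rw [hP]; simp [hj])]
      have hg2 : ∀ j, coroot j mu = 0 → coroot j (u - v) = 0 := by
        intro j hj
        by_cases hjP : j ∈ P
        · rw [map_sub, hucor, if_pos hjP, sub_self]
        · rw [map_sub, hucor, if_neg hjP, zero_sub, neg_eq_zero]
          have hj1 : coroot j lam = 0 := by
            by_contra hc
            exact hjP (by rw [hP]; simp [hc])
          by_cases hjS : j ∈ S
          · exact hvz j hjS hj1 hj
          · exact hWcor j hj1 hj hjS v hv
      have hg3 : ∀ j, x j (lam - mu) = 0 → x j (u - (u - v)) = 0 := by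
        intro j hj
        have hjS : j ∉ S := fun h => ((hmemS j).1 h) hj
        have huv : u - (u - v) = v := by abel
        rw [huv]
        exact hWx v hv j hjS
      obtain ⟨s, hs1, hs2⟩ := hEXT u (u - v) hg1 hg2 hg3
      refine ⟨s, ?_⟩
      rw [smul_sub, ← hs1, ← hs2]
      abel
    -- dimension bound : at most one index in S with a nonzero coroot value
    haveI : FiniteDimensional ℚ V := Module.Finite.of_basis b
    have hcard1 : (S.filter (fun j => ¬(coroot j lam = 0 ∧ coroot j mu = 0))).card ≤ 1 := by
      set E : Finset (Fin r) := S.filter (fun j => coroot j lam = 0 ∧ coroot j mu = 0) with hE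
      set ψ : Wsp →ₗ[ℚ] (↥E → ℚ) :=
        LinearMap.pi (fun j => (coroot j.1).comp Wsp.subtype) with hψ
      set Z : Submodule ℚ V := Submodule.span ℚ {lam - mu} with hZ
      have hincl : ∀ y : ↥Wsp, y ∈ LinearMap.ker ψ → (y : V) ∈ Z := by
        intro y hy
        have hcond : ∀ j ∈ S, coroot j lam = 0 → coroot j mu = 0 → coroot j (y : V) = 0 := by
          intro j hjS hj1 hj2
          have := congrFun (LinearMap.mem_ker.mp hy) ⟨j, by rw [hE]; exact Finset.mem_filter.mpr ⟨hjS, hj1, hj2⟩⟩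
          exact this
        obtain ⟨s, hs⟩ := hkerY (y : V) y.2 hcond
        rw [hZ]
        exact Submodule.mem_span_singleton.mpr ⟨s, hs.symm⟩
      set L : ↥(LinearMap.ker ψ) →ₗ[ℚ] ↥Z :=
        LinearMap.codRestrict Z ((Wsp.subtype).comp (LinearMap.ker ψ).subtype)
          (fun y => hincl y.1 y.2) with hL
      have hLinj : Function.Injective L := by
        intro y1 y2 h
        have h' : ((y1 : Wsp) : V) = ((y2 : Wsp) : V) := by
          have h2' := congrArg (Subtype.val : ↥Z → V) h
          exact h2'
        exact Subtype.ext (Subtype.ext h')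
      have hz1 : Module.finrank ℚ ↥Z = 1 := finrank_span_singleton hzero
      have hfk : Module.finrank ℚ ↥(LinearMap.ker ψ) ≤ 1 := by
        have := LinearMap.finrank_le_finrank_of_injective hLinj
        omega
      have hrn := LinearMap.finrank_range_add_finrank_ker ψ
      have hrange : Module.finrank ℚ ↥(LinearMap.range ψ) ≤ E.card := by
        have h1' := Submodule.finrank_le (LinearMap.range ψ)
        have h2' : Module.finrank ℚ (↥E → ℚ) = E.card := by
          rw [Module.finrank_pi ℚ]
          exact Fintype.card_coe E
        omega
      have hWdim : Module.finrank ℚ ↥Wsp = S.card := by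
        have hli : LinearIndependent ℚ (fun j : {z // z ∈ S} => b (j : Fin r)) :=
          b.linearIndependent.comp _ Subtype.val_injective
        have := finrank_span_eq_card hli
        have hrg : Set.range (fun j : {z // z ∈ S} => b (j : Fin r)) = b '' (S : Set (Fin r)) := by
          ext y
          constructor
          · rintro ⟨⟨j, hj⟩, rfl⟩; exact ⟨j, hj, rfl⟩
          · rintro ⟨j, hj, rfl⟩; exact ⟨⟨j, hj⟩, rfl⟩
        rw [hrg] at this
        rw [hWsp, this, Fintype.card_coe]
      have hsplit := Finset.card_filter_add_card_filter_not
        (s := S) (p := fun j => coroot j lam = 0 ∧ coroot j mu = 0)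
      rw [← hE] at hsplit
      omega
    have hp0mem : p0 ∈ S.filter (fun j => ¬(coroot j lam = 0 ∧ coroot j mu = 0)) :=
      Finset.mem_filter.mpr ⟨hPS p0 hp0, fun h => hp0 h.1⟩
    have huniq : ∀ j ∈ S.filter (fun j => ¬(coroot j lam = 0 ∧ coroot j mu = 0)), j = p0 :=
      fun j hj => Finset.card_le_one.mp hcard1 j hj p0 hp0mem
    -- uniqueness of the support of lam
    have hlamonly : ∀ j, j ≠ p0 → coroot j lam = 0 := by
      intro j hj
      by_contra hc
      exact hj (huniq j (Finset.mem_filter.mpr ⟨hPS j hc, fun h => hc h.1⟩))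
    -- slackness
    have hslack : ∀ j, coroot j mu ≠ 0 → x j (lam - mu) = 0 := by
      intro j hj
      by_contra hc
      have hjmem : j ∈ S.filter (fun j => ¬(coroot j lam = 0 ∧ coroot j mu = 0)) :=
        Finset.mem_filter.mpr ⟨(hmemS j).2 hc, fun h => hj h.2⟩
      have := huniq j hjmem
      rw [this] at hj
      exact hj (hslack0 p0 hp0)
    set a : ℚ := coroot p0 lam with ha
    have hlameq : lam = a • ϖ p0 := by
      have : lam - a • ϖ p0 = 0 := by
        apply hnondeg
        intro j
        rw [map_sub, map_smul, hϖ, smul_eq_mul]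
        by_cases hj : p0 = j
        · rw [if_pos hj, ← hj, mul_one, ha, sub_self]
        · rw [if_neg hj, mul_zero, hlamonly j (fun h => hj h.symm), sub_zero]
      have := sub_eq_zero.mp this
      exact this
    refine ⟨p0, a, hp0pos, Finset.univ.filter (fun k => coroot k mu = 0),
      Finset.univ.filter (fun k => ¬(coroot k mu = 0)), ?_, ?_, a⁻¹ • mu, ?_, ?_, hlameq, ?_⟩
    · rw [Finset.disjoint_left]
      intro k hk1 hk2
      rw [Finset.mem_filter] at hk1 hk2
      exact hk2.2 hk1.2
    · exact Finset.filter_union_filter_not_eq _ _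
    · intro k hk
      rw [Finset.mem_filter] at hk
      rw [map_smul, hk.2, smul_zero]
    · intro j hj
      rw [Finset.mem_filter] at hj
      have hxj : x j (lam - mu) = 0 := hslack j hj.2
      have hrw : ϖ p0 - a⁻¹ • mu = a⁻¹ • (lam - mu) := by
        rw [smul_sub, hlameq, smul_smul, inv_mul_cancel₀ hp0pos.ne', one_smul]
      rw [hrw, map_smul, hxj, smul_zero]
    · rw [smul_smul, mul_inv_cancel₀ hp0pos.ne', one_smul]
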